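/- Let p ∈ [2,∞), s ∈ (0,1), and let (a_ℓ)_{ℓ∈ℤ} be nonnegative reals with S := ∑_{ℓ∈ℤ} 2^{2ℓs} a_ℓ^2 < ∞. Then ∑_{k∈ℤ} (∑_{j<0} 2^{2j} 2^{2ks} a_{k+j}^2)^{p/2} ≤ C (1-s)^{-1} S^{p/2} for a constant C depending only on p. -/

import Mathlib

open scoped ENNReal

/-- Low-frequency summation lemma for `p ≥ 2`: if `S = ∑_ℓ 2^{2ℓs} a_ℓ² < ∞` then
`∑_{k∈ℤ} (∑_{j<0} 2^{2j} 2^{2ks} a_{k+j}²)^{p/2} ≤ C (1-s)⁻¹ S^{p/2}`.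
Here negative `j` are parametrized by `j = -(i+1)` for `i : ℕ`. -/
theorem discrete_low_frequency_lemma (p : ℝ) (hp : 2 ≤ p) :
    ∃ C : ℝ, 0 < C ∧ ∀ s : ℝ, 0 < s → s < 1 →
      ∀ a : ℤ → ℝ, (∀ ℓ, 0 ≤ a ℓ) →
        (∑' ℓ : ℤ, ENNReal.ofReal ((2 : ℝ) ^ (2 * (ℓ : ℝ) * s) * a ℓ ^ 2)) ≠ ⊤ →
        ∑' k : ℤ, (∑' i : ℕ, ENNReal.ofReal
            ((2 : ℝ) ^ (2 * (-((i : ℝ) + 1))) * (2 : ℝ) ^ (2 * (k : ℝ) * s) *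
              a (k - (i + 1)) ^ 2)) ^ (p / 2) ≤
          ENNReal.ofReal (C * (1 - s)⁻¹) *
            (∑' ℓ : ℤ, ENNReal.ofReal ((2 : ℝ) ^ (2 * (ℓ : ℝ) * s) * a ℓ ^ 2)) ^ (p / 2) := by
  refine ⟨2, two_pos, ?_⟩
  intro s hs hs1 a ha hS
  set c : ℤ → ℝ≥0∞ := fun ℓ => ENNReal.ofReal ((2 : ℝ) ^ (2 * (ℓ : ℝ) * s) * a ℓ ^ 2) with hc
  set S := ∑' ℓ : ℤ, c ℓ with hSdef
  set t : ℝ := 1 - s with htdef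
  have ht : 0 < t := by simp [htdef]; linarith
  have ht1 : t < 1 := by simp [htdef]; linarith
  set r : ℝ := (2 : ℝ) ^ (-(2 * t)) with hrdef
  have hr0 : 0 ≤ r := (Real.rpow_pos_of_pos two_pos _).le
  -- bound r ≤ (1+t)⁻¹
  have h2t : (1 : ℝ) + t ≤ (2 : ℝ) ^ (2 * t) := by
    rw [Real.rpow_def_of_pos two_pos]
    have hlog : (1 : ℝ) ≤ Real.log 2 * 2 := by
      have := Real.log_two_gt_d9; nlinarith
    have h1 : Real.log 2 * (2 * t) + 1 ≤ Real.exp (Real.log 2 * (2 * t)) :=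
      Real.add_one_le_exp _
    nlinarith
  have hrle : r ≤ (1 + t)⁻¹ := by
    rw [hrdef, Real.rpow_neg (by norm_num : (0:ℝ) ≤ 2)]
    exact inv_anti₀ (by linarith) h2t
  have hr1 : r < 1 := lt_of_le_of_lt hrle (by rw [inv_lt_one_iff₀]; right; linarith)
  have honemr : t / 2 ≤ 1 - r := by
    have h1t : (0:ℝ) < 1 + t := by linarith
    have : (1:ℝ) - (1+t)⁻¹ = t / (1+t) := by field_simp; ring
    have h2 : t / (1+t) ≥ t / 2 := by
      apply div_le_div_of_nonneg_left ht.le h1t (by linarith)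
    linarith [hrle, this]
  set q : ℝ≥0∞ := ENNReal.ofReal r with hq
  have hq1 : q ≤ 1 := by
    rw [hq, ← ENNReal.ofReal_one]
    exact ENNReal.ofReal_le_ofReal hr1.le
  -- rewrite the summand
  have key : ∀ (k : ℤ) (i : ℕ),
      ENNReal.ofReal ((2 : ℝ) ^ (2 * (-((i : ℝ) + 1))) * (2 : ℝ) ^ (2 * (k : ℝ) * s) *
          a (k - (i + 1)) ^ 2) = q ^ (i + 1) * c (k - (i + 1)) := by
    intro k i
    have hreal : (2 : ℝ) ^ (2 * (-((i : ℝ) + 1))) * (2 : ℝ) ^ (2 * (k : ℝ) * s) =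
        r ^ (i + 1) * (2 : ℝ) ^ (2 * ((k - (i + 1) : ℤ) : ℝ) * s) := by
      rw [hrdef, ← Real.rpow_natCast ((2:ℝ) ^ (-(2*t))) (i+1),
        ← Real.rpow_mul (by norm_num : (0:ℝ) ≤ 2), ← Real.rpow_add two_pos,
        ← Real.rpow_add two_pos]
      congr 1
      push_cast [htdef]
      ring
    rw [hreal, mul_assoc, ENNReal.ofReal_mul (by positivity),
      ENNReal.ofReal_pow hr0]
  -- the inner sum
  set T : ℤ → ℝ≥0∞ := fun k => ∑' i : ℕ, q ^ (i + 1) * c (k - (i + 1)) with hT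
  have hinner : ∀ k : ℤ, (∑' i : ℕ, ENNReal.ofReal
      ((2 : ℝ) ^ (2 * (-((i : ℝ) + 1))) * (2 : ℝ) ^ (2 * (k : ℝ) * s) *
        a (k - (i + 1)) ^ 2)) = T k := by
    intro k; exact tsum_congr fun i => key k i
  have hTle : ∀ k, T k ≤ S := by
    intro k
    calc T k ≤ ∑' i : ℕ, c (k - (i + 1)) := by
          refine ENNReal.tsum_le_tsum fun i => ?_
          calc q ^ (i+1) * c (k - (i+1)) ≤ 1 * c (k - (i+1)) := by
                gcongr
                exact pow_le_one₀ zero_le hq1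
            _ = c (k - (i+1)) := one_mul _
      _ ≤ S := by
          refine ENNReal.tsum_comp_le_tsum_of_injective (f := fun i : ℕ => k - ((i : ℤ) + 1)) ?_ c
          intro i j hij
          simpa using hij
  have hp2 : (1:ℝ) ≤ p / 2 := by linarith
  have hp2' : (0:ℝ) ≤ p / 2 - 1 := by linarith
  have hpow : ∀ x : ℝ≥0∞, x ≤ S → x ^ (p/2) ≤ x * S ^ (p/2 - 1) := by
    intro x hx
    rcases eq_or_ne x 0 with h0 | h0
    · rw [h0, ENNReal.zero_rpow_of_pos (by linarith), zero_mul]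
    · have hxtop : x ≠ ⊤ := ne_top_of_le_ne_top hS hx
      conv_lhs => rw [show p/2 = 1 + (p/2 - 1) by ring]
      rw [ENNReal.rpow_add _ _ h0 hxtop, ENNReal.rpow_one]
      exact mul_le_mul_right (ENNReal.rpow_le_rpow hx hp2') x
  -- geometric sum bound
  have hgeom : (∑' i : ℕ, q ^ (i + 1)) ≤ ENNReal.ofReal (2 * (1 - s)⁻¹) := by
    calc (∑' i : ℕ, q ^ (i + 1)) ≤ ∑' i : ℕ, q ^ i :=
          ENNReal.tsum_le_tsum fun i => pow_le_pow_of_le_one zero_le hq1 (by omega)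
      _ = (1 - q)⁻¹ := ENNReal.tsum_geometric q
      _ ≤ ENNReal.ofReal (2 * (1 - s)⁻¹) := by
          rw [hq, ← ENNReal.ofReal_one, ← ENNReal.ofReal_sub _ hr0,
            ← ENNReal.ofReal_inv_of_pos (by linarith)]
          refine ENNReal.ofReal_le_ofReal ?_
          rw [← htdef]
          have h1 : (1 - r)⁻¹ ≤ (t/2)⁻¹ := by
            apply inv_anti₀ (by linarith) honemr
          have : (t/2)⁻¹ = 2 * t⁻¹ := by field_simp
          linarith [h1, this.le]
  -- sum swap
  have hswap : (∑' k : ℤ, T k) ≤ ENNReal.ofReal (2 * (1 - s)⁻¹) * S := by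
    have : (∑' k : ℤ, T k) = ∑' i : ℕ, q ^ (i + 1) * ∑' k : ℤ, c (k - (i + 1)) := by
      rw [hT]
      rw [ENNReal.tsum_comm]
      exact tsum_congr fun i => ENNReal.tsum_mul_left
    rw [this]
    have hshift : ∀ i : ℕ, (∑' k : ℤ, c (k - (i + 1))) = S := by
      intro i
      exact (Equiv.subRight ((i : ℤ) + 1)).tsum_eq c
    calc (∑' i : ℕ, q ^ (i + 1) * ∑' k : ℤ, c (k - (i + 1)))
        = (∑' i : ℕ, q ^ (i + 1)) * S := by
          rw [ENNReal.tsum_mul_right.symm]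
          exact tsum_congr fun i => by rw [hshift i]
      _ ≤ ENNReal.ofReal (2 * (1 - s)⁻¹) * S := by gcongr
  -- final chain
  calc (∑' k : ℤ, (∑' i : ℕ, ENNReal.ofReal
          ((2 : ℝ) ^ (2 * (-((i : ℝ) + 1))) * (2 : ℝ) ^ (2 * (k : ℝ) * s) *
            a (k - (i + 1)) ^ 2)) ^ (p / 2))
      = ∑' k : ℤ, (T k) ^ (p / 2) := tsum_congr fun k => by rw [hinner k]
    _ ≤ ∑' k : ℤ, T k * S ^ (p/2 - 1) := ENNReal.tsum_le_tsum fun k => hpow _ (hTle k)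
    _ = (∑' k : ℤ, T k) * S ^ (p/2 - 1) := ENNReal.tsum_mul_right
    _ ≤ (ENNReal.ofReal (2 * (1 - s)⁻¹) * S) * S ^ (p/2 - 1) := by gcongr
    _ ≤ ENNReal.ofReal (2 * (1 - s)⁻¹) * S ^ (p / 2) := by
        rw [mul_assoc]
        gcongr
        rcases eq_or_ne S 0 with h0 | h0
        · rw [h0, zero_mul]; exact zero_le
        · conv_rhs => rw [show p/2 = 1 + (p/2 - 1) by ring]
          rw [ENNReal.rpow_add _ _ h0 hS, ENNReal.rpow_one]
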